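/- If a group Γ admits a left-invariant mean on bounded real-valued functions and acts by homeomorphisms on a nonempty compact metric space X, then there exists a Γ-invariant Borel probability measure on X. -/

import Mathlib

open MeasureTheory
open BoundedContinuousFunction NNReal ENNReal Set TopologicalSpace

/-- If a group admits a left-invariant mean on bounded real-valued functions and acts
by homeomorphisms on a nonempty compact metric space, then there is an invariant
Borel probability measure on the space. -/
theorem exists_invariant_measure_of_mean {G X : Type*} [Group G] [MetricSpace X]
    [CompactSpace X] [Nonempty X] [MeasurableSpace X] [BorelSpace X]
    [MulAction G X] (hcont : ∀ g : G, Continuous (fun x : X => g • x))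
    (A : (G → ℝ) → ℝ)
    (hadd : ∀ f₁ f₂ : G → ℝ, (∃ C, ∀ x, |f₁ x| ≤ C) → (∃ C, ∀ x, |f₂ x| ≤ C) →
      A (f₁ + f₂) = A f₁ + A f₂)
    (hsmul : ∀ (c : ℝ) (f : G → ℝ), (∃ C, ∀ x, |f x| ≤ C) → A (c • f) = c * A f)
    (hone : A (fun _ => 1) = 1)
    (hpos : ∀ f : G → ℝ, (∃ C, ∀ x, |f x| ≤ C) → (∀ x, 0 ≤ f x) → 0 ≤ A f)
    (hinv : ∀ (f : G → ℝ), (∃ C, ∀ x, |f x| ≤ C) →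
      ∀ g : G, A (fun x => f (g * x)) = A f) :
    ∃ μ : Measure X, IsProbabilityMeasure μ ∧
      ∀ (g : G) (s : Set X), MeasurableSet s → μ ((fun x : X => g • x) ⁻¹' s) = μ s := by
  obtain ⟨x₀⟩ : Nonempty X := inferInstance
  -- boundedness of orbit functions
  have hψb : ∀ f : X →ᵇ ℝ≥0, ∃ C, ∀ g : G, |(f (g • x₀) : ℝ)| ≤ C := by
    intro f
    obtain ⟨C, hC⟩ := f.bounded
    refine ⟨(f x₀ : ℝ) + C, fun g => ?_⟩
    rw [abs_of_nonneg (f (g • x₀)).coe_nonneg]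
    have := hC (g • x₀) x₀
    rw [NNReal.dist_eq] at this
    have := le_trans (le_abs_self _) this
    linarith
  have hψ_nonneg : ∀ (f : X →ᵇ ℝ≥0) (g : G), (0:ℝ) ≤ (f (g • x₀) : ℝ) :=
    fun f g => (f (g • x₀)).coe_nonneg
  -- the functional
  set Λ : (X →ᵇ ℝ≥0) →ₗ[ℝ≥0] ℝ≥0 :=
    { toFun := fun f => ⟨A (fun g => (f (g • x₀) : ℝ)), hpos _ (hψb f) (hψ_nonneg f)⟩
      map_add' := by
        intro f h
        ext
        have : (fun g : G => ((f + h) (g • x₀) : ℝ))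
            = (fun g => (f (g • x₀) : ℝ)) + (fun g => (h (g • x₀) : ℝ)) := by
          funext g; simp [NNReal.coe_add]
        change A (fun g => ((f + h) (g • x₀) : ℝ)) =
          A (fun g => (f (g • x₀) : ℝ)) + A (fun g => (h (g • x₀) : ℝ))
        rw [this, hadd _ _ (hψb f) (hψb h)]
      map_smul' := by
        intro c f
        ext
        have : (fun g : G => ((c • f) (g • x₀) : ℝ))
            = (c : ℝ) • (fun g => (f (g • x₀) : ℝ)) := by
          funext g; simp [NNReal.smul_def]
        change A (fun g => ((c • f) (g • x₀) : ℝ)) = (c : ℝ) * A (fun g => (f (g • x₀) : ℝ))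
        rw [this, hsmul _ _ (hψb f)] } with hΛdef
  have hΛ_apply : ∀ f : X →ᵇ ℝ≥0, (Λ f : ℝ) = A (fun g => (f (g • x₀) : ℝ)) := fun f => rfl
  -- monotonicity
  have hA_mono : ∀ f h : G → ℝ, (∃ C, ∀ x, |f x| ≤ C) → (∃ C, ∀ x, |h x| ≤ C) →
      (∀ g, f g ≤ h g) → A f ≤ A h := by
    intro f h hf hh hle
    obtain ⟨Cf, hCf⟩ := hf; obtain ⟨Ch, hCh⟩ := hh
    have hb : ∃ C, ∀ x, |(h - f) x| ≤ C := by
      refine ⟨Ch + Cf, fun x => ?_⟩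
      have := abs_sub (h x) (f x)
      simp only [Pi.sub_apply]
      calc |h x - f x| ≤ |h x| + |f x| := abs_sub _ _
        _ ≤ Ch + Cf := add_le_add (hCh x) (hCf x)
    have : A (f + (h - f)) = A f + A (h - f) := hadd _ _ ⟨Cf, hCf⟩ hb
    rw [add_sub_cancel] at this
    rw [this]
    have := hpos _ hb (fun x => by simpa using hle x)
    linarith
  have hΛ_mono : ∀ f h : X →ᵇ ℝ≥0, (∀ x, f x ≤ h x) → Λ f ≤ Λ h := by
    intro f h hle
    rw [← NNReal.coe_le_coe, hΛ_apply, hΛ_apply]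
    exact hA_mono _ _ (hψb f) (hψb h) (fun g => NNReal.coe_le_coe.mpr (hle _))
  have hΛ_one : Λ (1 : X →ᵇ ℝ≥0) = 1 := by
    rw [← NNReal.coe_inj, hΛ_apply]
    simpa using hone
  -- invariance
  have hΛ_inv : ∀ (g : G) (f : X →ᵇ ℝ≥0),
      Λ (f.compContinuous ⟨fun x => g • x, hcont g⟩) = Λ f := by
    intro g f
    rw [← NNReal.coe_inj, hΛ_apply, hΛ_apply]
    have : (fun h : G => ((f.compContinuous ⟨fun x => g • x, hcont g⟩) (h • x₀) : ℝ))
        = fun h : G => (fun k : G => (f (k • x₀) : ℝ)) (g * h) := by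
      funext h
      simp [BoundedContinuousFunction.compContinuous_apply, mul_smul]
    rw [this, hinv _ (hψb f) g]
  set L : CompactlySupportedContinuousMap X ℝ≥0 →ₗ[ℝ≥0] (X →ᵇ ℝ≥0) :=
    { toFun := fun f => f.toBoundedContinuousFunction
      map_add' := fun _ _ => rfl
      map_smul' := fun _ _ => rfl } with hLdef
  set ΛC : CompactlySupportedContinuousMap X ℝ≥0 →ₗ[ℝ≥0] ℝ≥0 := Λ.comp L with hΛCdef
  -- superadditivity on disjoint compacts
  have hsup : ∀ K₁ K₂ : Compacts X, Disjoint (K₁ : Set X) K₂ →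
      rieszContentAux ΛC (K₁ ⊔ K₂) = rieszContentAux ΛC K₁ + rieszContentAux ΛC K₂ := by
    intro K₁ K₂ hd
    refine le_antisymm (rieszContentAux_sup_le ΛC K₁ K₂) ?_
    obtain ⟨w, hw0, hw1, hw01⟩ :=
      exists_continuous_zero_one_of_isClosed K₁.isCompact.isClosed K₂.isCompact.isClosed hd
    set φ₂ : C(X, ℝ≥0) := ⟨fun x => Real.toNNReal (w x),
      continuous_real_toNNReal.comp w.continuous⟩ with hφ₂def
    have hφ₂le : ∀ x, φ₂ x ≤ 1 := fun x => by
      simp only [hφ₂def, ContinuousMap.coe_mk]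
      exact Real.toNNReal_le_one.mpr (hw01 x).2
    set φ₁ : C(X, ℝ≥0) := ⟨fun x => 1 - φ₂ x,
      Continuous.sub continuous_const φ₂.continuous⟩ with hφ₁def
    refine le_csInf (rieszContentAux_image_nonempty ΛC (K₁ ⊔ K₂)) ?_
    rintro b ⟨f, hf, rfl⟩
    set f₁ : X →ᵇ ℝ≥0 := mkOfCompact (f.toContinuousMap * φ₁) with hf₁def
    set f₂ : X →ᵇ ℝ≥0 := mkOfCompact (f.toContinuousMap * φ₂) with hf₂def
    have hsum : f₁ + f₂ = L f := by
      ext x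
      show ((f₁ x + f₂ x : ℝ≥0) : ℝ) = (f x : ℝ)
      simp only [hf₁def, hf₂def, BoundedContinuousFunction.add_apply, mkOfCompact_apply,
        ContinuousMap.mul_apply, CompactlySupportedContinuousMap.coe_toContinuousMap, hφ₁def,
        ContinuousMap.coe_mk]
      rw [← mul_add, tsub_add_cancel_of_le (hφ₂le x), mul_one]
    have h₁ : rieszContentAux ΛC K₁ ≤ Λ f₁ := by
      refine rieszContentAux_le ΛC
        (f := CompactlySupportedContinuousMap.continuousMapEquiv f₁.toContinuousMap)
        (fun x hx => ?_)
      show 1 ≤ f₁ x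
      have : φ₂ x = 0 := by
        simp only [hφ₂def, ContinuousMap.coe_mk]
        rw [show w x = 0 from hw0 hx]; simp
      simp only [hf₁def, mkOfCompact_apply, ContinuousMap.mul_apply,
        CompactlySupportedContinuousMap.coe_toContinuousMap, hφ₁def, ContinuousMap.coe_mk, this,
        tsub_zero, mul_one]
      exact hf x (Or.inl hx)
    have h₂ : rieszContentAux ΛC K₂ ≤ Λ f₂ := by
      refine rieszContentAux_le ΛC
        (f := CompactlySupportedContinuousMap.continuousMapEquiv f₂.toContinuousMap)
        (fun x hx => ?_)
      show 1 ≤ f₂ x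
      have : φ₂ x = 1 := by
        simp only [hφ₂def, ContinuousMap.coe_mk]
        rw [show w x = 1 from hw1 hx]; simp
      simp only [hf₂def, mkOfCompact_apply, ContinuousMap.mul_apply,
        CompactlySupportedContinuousMap.coe_toContinuousMap, this, mul_one]
      exact hf x (Or.inr hx)
    calc rieszContentAux ΛC K₁ + rieszContentAux ΛC K₂ ≤ Λ f₁ + Λ f₂ := add_le_add h₁ h₂
      _ = Λ (f₁ + f₂) := (map_add Λ f₁ f₂).symm
      _ = ΛC f := by rw [hsum]; rfl
  -- the content
  set μC : Content X :=
    { toFun := rieszContentAux ΛC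
      mono' := fun K₁ K₂ h => rieszContentAux_mono ΛC h
      sup_disjoint' := fun K₁ K₂ hd _ _ => hsup K₁ K₂ hd
      sup_le' := rieszContentAux_sup_le ΛC } with hμCdef
  -- total mass one
  have htop : rieszContentAux ΛC ⊤ = 1 := by
    refine le_antisymm ?_ ?_
    · have := rieszContentAux_le ΛC (K := ⊤)
        (f := CompactlySupportedContinuousMap.continuousMapEquiv (1 : X →ᵇ ℝ≥0).toContinuousMap)
        (fun x _ => le_refl 1)
      change _ ≤ Λ 1 at this
      rwa [hΛ_one] at this
    · refine le_csInf (rieszContentAux_image_nonempty ΛC ⊤) ?_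
      rintro b ⟨f, hf, rfl⟩
      have : Λ 1 ≤ ΛC f := hΛ_mono 1 (L f) (fun x => (hf x trivial : _))
      rwa [hΛ_one] at this
  -- invariance of the content
  have hle : ∀ (g : G) (K : Compacts X),
      rieszContentAux ΛC K ≤ rieszContentAux ΛC (K.map _ (hcont g)) := by
    intro g K
    refine le_csInf (rieszContentAux_image_nonempty ΛC _) ?_
    rintro b ⟨f, hf, rfl⟩
    have h1 : rieszContentAux ΛC K ≤ Λ ((L f).compContinuous ⟨fun x => g • x, hcont g⟩) := by
      refine rieszContentAux_le ΛC (f := CompactlySupportedContinuousMap.continuousMapEquiv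
        ((L f).compContinuous ⟨fun x => g • x, hcont g⟩).toContinuousMap) (fun x hx => ?_)
      show 1 ≤ f (g • x)
      simpa using hf (g • x) ⟨x, hx, rfl⟩
    rwa [hΛ_inv] at h1
  have hmap : ∀ (g : G) (K : Compacts X),
      rieszContentAux ΛC (K.map _ (hcont g)) = rieszContentAux ΛC K := by
    intro g K
    refine le_antisymm ?_ (hle g K)
    have h2 := hle g⁻¹ (K.map _ (hcont g))
    have hKK : (K.map _ (hcont g)).map _ (hcont g⁻¹) = K := by
      ext x
      simp only [Compacts.coe_map, ← Set.image_comp]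
      constructor
      · rintro ⟨y, hy, rfl⟩; simpa using hy
      · intro hx; exact ⟨x, hx, by simp⟩
    rwa [hKK] at h2
  -- assemble
  refine ⟨μC.measure, ?_, ?_⟩
  · constructor
    rw [Content.measure_apply _ MeasurableSet.univ,
      μC.outerMeasure_of_isOpen univ isOpen_univ,
      μC.innerContent_of_isCompact isCompact_univ isOpen_univ]
    show ((rieszContentAux ΛC ⟨univ, isCompact_univ⟩ : ℝ≥0) : ℝ≥0∞) = 1
    rw [show (⟨univ, isCompact_univ⟩ : Compacts X) = ⊤ from rfl, htop]
    simp
  · intro g s hs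
    let e : X ≃ₜ X :=
      { toFun := fun x => g • x
        invFun := fun x => g⁻¹ • x
        left_inv := fun x => inv_smul_smul g x
        right_inv := fun x => smul_inv_smul g x
        continuous_toFun := hcont g
        continuous_invFun := hcont g⁻¹ }
    have hKe : ∀ ⦃K : Compacts X⦄, μC (K.map e e.continuous) = μC K := by
      intro K
      show ((μC.toFun (K.map e e.continuous) : ℝ≥0) : ℝ≥0∞) = ((μC.toFun K : ℝ≥0) : ℝ≥0∞)
      exact_mod_cast hmap g K
    rw [Content.measure_apply _ ((hcont g).measurable hs), Content.measure_apply _ hs]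
    exact μC.outerMeasure_preimage e hKe s
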